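/- Let G be a connected graph such that every cut vertex of G separates G into exactly two components and every 2-connected block of G contains at most two cut vertices of G. Then there exists an ordering v₁, …, vₙ of all vertices of G such that for every i with 1 ≤ i ≤ n−1, both the induced subgraph on {v₁,…,vᵢ} and the induced subgraph on {v_{i+1},…,vₙ} are connected. -/

import Mathlib

open SimpleGraph

/-- `v` is a cut vertex of `G`: removing it disconnects the graph. -/
def IsCutVertex {V : Type*} [Fintype V] (G : SimpleGraph V) (v : V) : Prop :=
  ¬ (G.induce ({v}ᶜ : Set V)).Preconnected

/-- The induced subgraph on `B` is connected and has no cut vertex of its own. -/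
def NoCutVertexOn {V : Type*} [Fintype V] (G : SimpleGraph V) (B : Set V) : Prop :=
  (G.induce B).Connected ∧ ∀ b ∈ B, (G.induce ((B \ {b}) : Set V)).Preconnected

/-- `B` is a block of `G`: a maximal vertex set inducing a subgraph
with no cut vertex of its own. -/
def IsBlock {V : Type*} [Fintype V] (G : SimpleGraph V) (B : Set V) : Prop :=
  NoCutVertexOn G B ∧ ∀ B' : Set V, B ⊆ B' → NoCutVertexOn G B' → B' = B

theorem exists_maximal_wrt_port {α β : Type*} [PartialOrder β] (f : α → β) (s : Set α)
    (h : s.Finite) (hs : s.Nonempty) : ∃ a ∈ s, ∀ a' ∈ s, f a ≤ f a' → f a = f a' := by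
  obtain ⟨i, hi, hmax⟩ := Set.Finite.exists_maximalFor f s h hs
  exact ⟨i, hi, fun a ha hle => le_antisymm hle (hmax ha hle)⟩

theorem exists_minimal_wrt_port {α β : Type*} [PartialOrder β] (f : α → β) (s : Set α)
    (h : s.Finite) (hs : s.Nonempty) : ∃ a ∈ s, ∀ a' ∈ s, f a' ≤ f a → f a = f a' := by
  obtain ⟨i, hi, hmin⟩ := Set.Finite.exists_minimalFor f s h hs
  exact ⟨i, hi, fun a ha hle => le_antisymm (hmin ha hle) hle⟩

namespace StNum

variable {V : Type*} [Fintype V] (G : SimpleGraph V)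

/-- reachability inside a vertex set -/
def Rch (S : Set V) (x y : V) : Prop := ∃ w : G.Walk x y, ∀ z ∈ w.support, z ∈ S

variable {G}

lemma Rch.mem_left {S : Set V} {x y : V} (h : Rch G S x y) : x ∈ S := by
  obtain ⟨w, hw⟩ := h; exact hw _ w.start_mem_support

lemma Rch.mem_right {S : Set V} {x y : V} (h : Rch G S x y) : y ∈ S := by
  obtain ⟨w, hw⟩ := h; exact hw _ w.end_mem_support

lemma Rch.refl {S : Set V} {x : V} (hx : x ∈ S) : Rch G S x x :=
  ⟨Walk.nil, by simp [hx]⟩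

lemma Rch.symm {S : Set V} {x y : V} (h : Rch G S x y) : Rch G S y x := by
  obtain ⟨w, hw⟩ := h
  exact ⟨w.reverse, by simpa [Walk.support_reverse] using hw⟩

lemma Rch.trans {S : Set V} {x y z : V} (h : Rch G S x y) (h' : Rch G S y z) :
    Rch G S x z := by
  obtain ⟨w, hw⟩ := h; obtain ⟨w', hw'⟩ := h'
  refine ⟨w.append w', ?_⟩
  intro u hu
  rw [Walk.support_append, List.mem_append] at hu
  rcases hu with hu | hu
  · exact hw _ hu
  · exact hw' _ (List.mem_of_mem_tail hu)

lemma Rch.mono {S T : Set V} (hST : S ⊆ T) {x y : V} (h : Rch G S x y) : Rch G T x y := by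
  obtain ⟨w, hw⟩ := h; exact ⟨w, fun z hz => hST (hw z hz)⟩

lemma rch_adj {S : Set V} {x y : V} (h : G.Adj x y) (hx : x ∈ S) (hy : y ∈ S) :
    Rch G S x y :=
  ⟨h.toWalk, by simp [hx, hy]⟩

lemma Rch.cons {S : Set V} {x y z : V} (h : G.Adj x y) (hx : x ∈ S) (h' : Rch G S y z) :
    Rch G S x z :=
  (rch_adj h hx h'.mem_left).trans h'

/-- `S` is Rch-connected. -/
def RConn (G : SimpleGraph V) (S : Set V) : Prop := ∀ x ∈ S, ∀ y ∈ S, Rch G S x y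

/-- a walk in `G` staying in `S` gives a walk in `G.induce S`. -/
lemma rch_induce_reachable {S : Set V} {x y : V} (h : Rch G S x y) :
    (G.induce S).Reachable ⟨x, h.mem_left⟩ ⟨y, h.mem_right⟩ := by
  obtain ⟨w, hw⟩ := h
  induction w with
  | nil => rfl
  | @cons a b c hab w ih =>
    have hb : ∀ z ∈ w.support, z ∈ S := fun z hz => hw z (by simp [hz])
    have ha : a ∈ S := hw a (by simp)
    have hbS : b ∈ S := hb b w.start_mem_support
    have : (G.induce S).Adj ⟨a, ha⟩ ⟨b, hbS⟩ := by simpa [SimpleGraph.induce] using hab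
    exact (this.reachable).trans (ih hb)

lemma induce_reachable_rch {S : Set V} {x y : S} (h : (G.induce S).Reachable x y) :
    Rch G S x y := by
  obtain ⟨w⟩ := h
  refine ⟨w.map (Embedding.induce S).toHom, ?_⟩
  intro z hz
  erw [Walk.support_map, List.mem_map] at hz
  obtain ⟨⟨z', hz'⟩, _, rfl⟩ := hz
  exact hz'

lemma preconnected_induce_iff {S : Set V} :
    (G.induce S).Preconnected ↔ ∀ x ∈ S, ∀ y ∈ S, Rch G S x y := by
  constructor
  · intro h x hx y hy
    exact induce_reachable_rch (h ⟨x, hx⟩ ⟨y, hy⟩)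
  · intro h ⟨x, hx⟩ ⟨y, hy⟩
    exact rch_induce_reachable (h x hx y hy)

lemma connected_induce_iff {S : Set V} :
    (G.induce S).Connected ↔ S.Nonempty ∧ RConn G S := by
  rw [connected_iff, preconnected_induce_iff]
  constructor
  · rintro ⟨h1, ⟨⟨x, hx⟩⟩⟩; exact ⟨⟨x, hx⟩, h1⟩
  · rintro ⟨⟨x, hx⟩, h⟩; exact ⟨h, ⟨⟨x, hx⟩⟩⟩

lemma isCutVertex_iff {v : V} :
    IsCutVertex G v ↔ ¬ ∀ x, x ≠ v → ∀ y, y ≠ v → Rch G {v}ᶜ x y := by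
  unfold IsCutVertex
  rw [preconnected_induce_iff]
  constructor
  · intro h h'; exact h (fun x hx y hy => h' x hx y hy)
  · intro h h'; exact h (fun x hx y hy => h' x hx y hy)

lemma not_cut_rch {v : V} (h : ¬ IsCutVertex G v) {x y : V} (hx : x ≠ v) (hy : y ≠ v) :
    Rch G {v}ᶜ x y := by
  rw [isCutVertex_iff, not_not] at h
  exact h x hx y hy


lemma exists_door {S B : Set V} {x y : V} (w : G.Walk x y) (hsupp : ∀ z ∈ w.support, z ∈ S)
    (hx : x ∉ B) (hy : y ∈ B) : ∃ c b, b ∈ B ∧ b ∈ S ∧ G.Adj c b ∧ Rch G (S \ B) x c := by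
  induction w with
  | nil => exact absurd hy hx
  | @cons a b' c hab w' ih =>
    by_cases hb' : b' ∈ B
    · exact ⟨a, b', hb', hsupp b' (by simp), hab, Rch.refl ⟨hsupp a (by simp), hx⟩⟩
    · obtain ⟨c₀, b₀, hb₀, hb₀S, hadj, hr⟩ := ih (fun z hz => hsupp z (by simp [hz])) hb' hy
      exact ⟨c₀, b₀, hb₀, hb₀S, hadj, Rch.cons hab ⟨hsupp a (by simp), hx⟩ hr⟩

lemma rconn_attach {S : Set V} (h : RConn G S) {v x : V} (hv : v ∈ S) (hx : x ∈ S)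
    (hxv : x ≠ v) : ∃ c, Rch G (S \ {v}) x c ∧ G.Adj c v := by
  obtain ⟨w, hw⟩ := h x hx v hv
  obtain ⟨c, b, hb, _, hadj, hr⟩ := exists_door (B := {v}) w hw (by simpa using hxv) rfl
  obtain rfl : b = v := hb
  exact ⟨c, hr, hadj⟩

lemma cut_two_sides (hcut2 : ∀ v : V, IsCutVertex G v →
      Nat.card ((G.induce ({v}ᶜ : Set V)).ConnectedComponent) = 2)
    {v a b s : V} (hv : IsCutVertex G v) (hs : s ≠ v) (ha : a ≠ v) (hb : b ≠ v)
    (h1 : ¬ Rch G {v}ᶜ s a) (h2 : ¬ Rch G {v}ᶜ s b) : Rch G {v}ᶜ a b := by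
  have h := hcut2 v hv
  rw [Nat.card_eq_two_iff] at h
  obtain ⟨p, q, hpq, huniv⟩ := h
  have hall : ∀ c : (G.induce ({v}ᶜ : Set V)).ConnectedComponent, c = p ∨ c = q := by
    intro c
    have : c ∈ ({p, q} : Set _) := huniv ▸ Set.mem_univ c
    simpa using this
  have hsv : s ∈ ({v}ᶜ : Set V) := hs
  have hav : a ∈ ({v}ᶜ : Set V) := ha
  have hbv : b ∈ ({v}ᶜ : Set V) := hb
  set H := G.induce ({v}ᶜ : Set V)
  have key : H.connectedComponentMk ⟨a, hav⟩ = H.connectedComponentMk ⟨b, hbv⟩ := by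
    have hsa : H.connectedComponentMk ⟨s, hsv⟩ ≠ H.connectedComponentMk ⟨a, hav⟩ := by
      intro hE; exact h1 (induce_reachable_rch (ConnectedComponent.eq.mp hE))
    have hsb : H.connectedComponentMk ⟨s, hsv⟩ ≠ H.connectedComponentMk ⟨b, hbv⟩ := by
      intro hE; exact h2 (induce_reachable_rch (ConnectedComponent.eq.mp hE))
    rcases hall (H.connectedComponentMk ⟨s, hsv⟩) with hcs | hcs <;>
      rcases hall (H.connectedComponentMk ⟨a, hav⟩) with hca | hca <;>
      rcases hall (H.connectedComponentMk ⟨b, hbv⟩) with hcb | hcb <;>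
      simp_all
  exact induce_reachable_rch (ConnectedComponent.eq.mp key)

lemma nocut_cross {B : Set V} (hB : NoCutVertexOn G B) {v x₁ x₂ : V}
    (h1 : x₁ ∈ B) (h2 : x₂ ∈ B) (n1 : x₁ ≠ v) (n2 : x₂ ≠ v) : Rch G {v}ᶜ x₁ x₂ := by
  by_cases hvB : v ∈ B
  · have h := hB.2 v hvB
    rw [preconnected_induce_iff] at h
    exact (h x₁ ⟨h1, n1⟩ x₂ ⟨h2, n2⟩).mono (fun z hz => hz.2)
  · have h := hB.1
    rw [connected_induce_iff] at h
    refine (h.2 x₁ h1 x₂ h2).mono ?_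
    intro z hz
    simp only [Set.mem_compl_iff, Set.mem_singleton_iff]
    rintro rfl
    exact hvB hz

lemma noCutVertexOn_iff {B : Set V} : NoCutVertexOn G B ↔
    (B.Nonempty ∧ RConn G B) ∧ ∀ b ∈ B, ∀ x ∈ B \ {b}, ∀ y ∈ B \ {b}, Rch G (B \ {b}) x y := by
  unfold NoCutVertexOn
  rw [connected_induce_iff]
  constructor
  · rintro ⟨h1, h2⟩
    refine ⟨h1, fun b hb x hx y hy => ?_⟩
    have := h2 b hb; rw [preconnected_induce_iff] at this
    exact this x hx y hy
  · rintro ⟨h1, h2⟩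
    refine ⟨h1, fun b hb => ?_⟩
    rw [preconnected_induce_iff]
    exact h2 b hb

lemma exists_block {B₀ : Set V} (h : NoCutVertexOn G B₀) : ∃ B, B₀ ⊆ B ∧ IsBlock G B := by
  classical
  have hfin : ({B | B₀ ⊆ B ∧ NoCutVertexOn G B} : Set (Set V)).Finite := Set.toFinite _
  obtain ⟨B, hBmem, hBmax⟩ := exists_maximal_wrt_port Set.ncard _ hfin
    ⟨B₀, subset_refl _, h⟩
  refine ⟨B, hBmem.1, hBmem.2, fun B' hBB' hB' => ?_⟩
  have hle : B.ncard ≤ B'.ncard := Set.ncard_le_ncard hBB' (Set.toFinite _)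
  have := hBmax B' ⟨hBmem.1.trans hBB', hB'⟩ hle
  exact (Set.eq_of_subset_of_ncard_le hBB' this.ge (Set.toFinite _)).symm ▸ rfl

lemma adj_noCut {a b : V} (hab : G.Adj a b) : NoCutVertexOn G {a, b} := by
  rw [noCutVertexOn_iff]
  have hne := hab.ne
  constructor
  · refine ⟨⟨a, by simp⟩, ?_⟩
    rintro x (rfl | rfl) y (rfl | rfl)
    · exact Rch.refl (by simp)
    · exact rch_adj hab (by simp) (by simp)
    · exact rch_adj hab.symm (by simp) (by simp)
    · exact Rch.refl (by simp)
  · intro c hc x hx y hy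
    have hxy : x = y := by
      rcases hc with rfl | hc
      · have hx' : x = b := by
          rcases hx.1 with h | h
          · exact absurd h (by simpa using hx.2)
          · exact h
        have hy' : y = b := by
          rcases hy.1 with h | h
          · exact absurd h (by simpa using hy.2)
          · exact h
        rw [hx', hy']
      · obtain rfl : c = b := hc
        have hx' : x = a := by
          rcases hx.1 with h | h
          · exact h
          · exact absurd h (by simpa using hx.2)
        have hy' : y = a := by
          rcases hy.1 with h | h
          · exact h
          · exact absurd h (by simpa using hy.2)
        rw [hx', hy']
    exact hxy ▸ Rch.refl hx


lemma path_remove {u v : V} {w : G.Walk u v} (hw : w.IsPath) {x z : V}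
    (hz : z ∈ w.support) (hzx : z ≠ x) :
    Rch G ({t | t ∈ w.support} \ {x}) z u ∨ Rch G ({t | t ∈ w.support} \ {x}) z v := by
  classical
  by_cases hx1 : x ∈ (w.takeUntil z hz).support
  · right
    refine ⟨w.dropUntil z hz, ?_⟩
    intro t ht
    refine ⟨Walk.support_dropUntil_subset _ _ ht, ?_⟩
    simp only [Set.mem_singleton_iff]
    intro hE
    have hE2 : x = t := hE.symm
    subst hE2
    have hspec := w.take_spec hz
    have hnd : ((w.takeUntil z hz).support ++ (w.dropUntil z hz).support.tail).Nodup := by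
      rw [← Walk.support_append, hspec]; exact hw.support_nodup
    have hdisj := List.disjoint_of_nodup_append hnd
    have hxtail : x ∉ (w.dropUntil z hz).support.tail := fun hmem => hdisj hx1 hmem
    have hxd : x ∈ (w.dropUntil z hz).support := ht
    rw [Walk.support_eq_cons] at hxd
    rcases List.mem_cons.mp hxd with h | h
    · exact hzx h.symm
    · exact hxtail h
  · left
    refine ⟨(w.takeUntil z hz).reverse, ?_⟩
    intro t ht
    rw [Walk.support_reverse, List.mem_reverse] at ht
    refine ⟨Walk.support_takeUntil_subset _ _ ht, ?_⟩
    simp only [Set.mem_singleton_iff]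
    intro hE
    have hE2 : x = t := hE.symm
    subst hE2
    exact hx1 ht

lemma block_attach {B : Set V} (hB : IsBlock G B) {p q : V} (hp : p ∈ B) (hq : q ∈ B)
    (hpq : p ≠ q) (hGc : RConn G Set.univ) {y : V} (hy : y ∉ B) :
    ∃ b ∈ B, IsCutVertex G b ∧ ∀ z ∈ B, z ≠ b → ¬ Rch G {b}ᶜ y z := by
  classical
  obtain ⟨⟨hBne, hBconn⟩, hBdel⟩ := noCutVertexOn_iff.mp hB.1
  set C : Set V := {z | Rch G Bᶜ y z} with hCdef
  have key : ∀ b₁ ∈ B, ∀ b₂ ∈ B, ∀ c₁ ∈ C, ∀ c₂ ∈ C,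
      G.Adj c₁ b₁ → G.Adj c₂ b₂ → b₁ = b₂ := by
    intro b₁ hb₁ b₂ hb₂ c₁ hc₁ c₂ hc₂ ha₁ ha₂
    by_contra hne
    have hr : Rch G Bᶜ c₁ c₂ := (hc₁ : Rch G Bᶜ y c₁).symm.trans hc₂
    obtain ⟨w₀, hw₀⟩ := hr
    set w := w₀.bypass with hwdef
    have hwsupp : ∀ z ∈ w.support, z ∈ Bᶜ := fun z hz => hw₀ z (w₀.support_bypass_subset hz)
    have hwpath : w.IsPath := w₀.bypass_isPath
    set P : Set V := {t | t ∈ w.support} with hPdef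
    have hPB : ∀ t ∈ P, t ∉ B := fun t ht => hwsupp t ht
    have hc₁P : c₁ ∈ P := w.start_mem_support
    have hc₂P : c₂ ∈ P := w.end_mem_support
    have hPend : ∀ z ∈ P, Rch G P z c₁ ∧ Rch G P z c₂ := by
      intro z hz
      constructor
      · refine ⟨(w.takeUntil z hz).reverse, ?_⟩
        intro t ht
        rw [Walk.support_reverse, List.mem_reverse] at ht
        exact Walk.support_takeUntil_subset _ _ ht
      · exact ⟨w.dropUntil z hz, fun t ht => Walk.support_dropUntil_subset _ _ ht⟩
    have hBP : NoCutVertexOn G (B ∪ P) := by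
      rw [noCutVertexOn_iff]
      have hconn : RConn G (B ∪ P) := by
        have hall : ∀ u ∈ B ∪ P, Rch G (B ∪ P) u b₁ := by
          intro u hu
          rcases hu with hu | hu
          · exact (hBconn u hu b₁ hb₁).mono Set.subset_union_left
          · exact (((hPend u hu).1).mono Set.subset_union_right).trans
              (rch_adj ha₁ (Or.inr hc₁P) (Or.inl hb₁))
        intro u hu u' hu'
        exact (hall u hu).trans (hall u' hu').symm
      refine ⟨⟨⟨b₁, Or.inl hb₁⟩, hconn⟩, ?_⟩
      intro e he xx hxx yy hyy
      rcases he with heB | heP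
      · have heP' : e ∉ P := fun hmem => hPB e hmem heB
        have hPsub : P ⊆ (B ∪ P) \ {e} := by
          intro t ht
          exact ⟨Or.inr ht, by simp only [Set.mem_singleton_iff]; rintro rfl; exact heP' ht⟩
        by_cases h : e = b₁
        · have hre : b₂ ∉ ({e} : Set V) := by
            simp only [Set.mem_singleton_iff]
            intro hE
            exact hne ((hE.trans h).symm)
          have hreach : ∀ u ∈ (B ∪ P) \ {e}, Rch G ((B ∪ P) \ {e}) u b₂ := by
            intro u hu
            rcases hu.1 with huB | huP
            · exact (hBdel e heB u ⟨huB, hu.2⟩ b₂ ⟨hb₂, hre⟩).mono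
                (Set.diff_subset_diff_left Set.subset_union_left)
            · exact (((hPend u huP).2).mono hPsub).trans
                (rch_adj ha₂ (hPsub hc₂P) ⟨Or.inl hb₂, hre⟩)
          exact (hreach xx hxx).trans (hreach yy hyy).symm
        · have hre : b₁ ∉ ({e} : Set V) := by
            simp only [Set.mem_singleton_iff]
            intro hE
            exact h hE.symm
          have hreach : ∀ u ∈ (B ∪ P) \ {e}, Rch G ((B ∪ P) \ {e}) u b₁ := by
            intro u hu
            rcases hu.1 with huB | huP
            · exact (hBdel e heB u ⟨huB, hu.2⟩ b₁ ⟨hb₁, hre⟩).mono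
                (Set.diff_subset_diff_left Set.subset_union_left)
            · exact (((hPend u huP).1).mono hPsub).trans
                (rch_adj ha₁ (hPsub hc₁P) ⟨Or.inl hb₁, hre⟩)
          exact (hreach xx hxx).trans (hreach yy hyy).symm
      · have heB' : e ∉ B := hPB e heP
        have hBsub : B ⊆ (B ∪ P) \ {e} := by
          intro t ht
          exact ⟨Or.inl ht, by simp only [Set.mem_singleton_iff]; rintro rfl; exact heB' ht⟩
        have hb₁e : b₁ ∉ ({e} : Set V) := by
          simp only [Set.mem_singleton_iff]; rintro rfl; exact heB' hb₁
        have hb₂e : b₂ ∉ ({e} : Set V) := by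
          simp only [Set.mem_singleton_iff]; rintro rfl; exact heB' hb₂
        have hreach : ∀ u ∈ (B ∪ P) \ {e}, Rch G ((B ∪ P) \ {e}) u b₁ := by
          intro u hu
          rcases hu.1 with huB | huP
          · exact (hBconn u huB b₁ hb₁).mono hBsub
          · have hune : u ≠ e := by
              intro hE; exact hu.2 (by simp [hE])
            have hsplit := path_remove hwpath huP hune
            have hPsub' : {t | t ∈ w.support} \ {e} ⊆ (B ∪ P) \ {e} :=
              fun t ht => ⟨Or.inr ht.1, ht.2⟩
            rcases hsplit with hs | hs
            · exact ((hs.mono hPsub').trans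
                (rch_adj ha₁ ⟨Or.inr hc₁P, hs.mem_right.2⟩ ⟨Or.inl hb₁, hb₁e⟩))
            · exact ((hs.mono hPsub').trans
                (rch_adj ha₂ ⟨Or.inr hc₂P, hs.mem_right.2⟩ ⟨Or.inl hb₂, hb₂e⟩)).trans
                ((hBconn b₂ hb₂ b₁ hb₁).mono hBsub)
        exact (hreach xx hxx).trans (hreach yy hyy).symm
    have hEQ : B ∪ P = B := hB.2 _ Set.subset_union_left hBP
    exact hPB c₁ hc₁P (hEQ ▸ (Or.inr hc₁P : c₁ ∈ B ∪ P))
  obtain ⟨w0, hw0⟩ := hGc y trivial p trivial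
  obtain ⟨c, b, hbB, hbS, hadj, hrc⟩ := exists_door (B := B) w0 hw0 hy hp
  have hcC : c ∈ C := hrc.mono (fun z hz => hz.2)
  have noreach : ∀ z ∈ B, z ≠ b → ¬ Rch G {b}ᶜ y z := by
    intro z hzB hzb hR
    obtain ⟨w, hw⟩ := hR
    obtain ⟨c', b', hb'B, hb'S, hadj', hrc'⟩ := exists_door (B := B) w hw hy hzB
    have hc'C : c' ∈ C := hrc'.mono (fun t ht => ht.2)
    have : b' = b := key b' hb'B b hbB c' hc'C c hcC hadj' hadj
    exact (hb'S : b' ∈ ({b}ᶜ : Set V)) (by simp [this])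
  refine ⟨b, hbB, ?_, noreach⟩
  obtain ⟨z₀, hz₀B, hz₀b⟩ : ∃ z₀, z₀ ∈ B ∧ z₀ ≠ b := by
    by_cases h : p = b
    · exact ⟨q, hq, fun hE => hpq (h ▸ hE ▸ rfl)⟩
    · exact ⟨p, hp, h⟩
  rw [isCutVertex_iff]
  intro hall2
  exact noreach z₀ hz₀B hz₀b (hall2 y (fun hE => hy (hE ▸ hbB)) z₀ hz₀b)


variable (G) in
/-- the component of `G - v` containing `x` -/
def Cmp (v x : V) : Set V := {z | Rch G {v}ᶜ x z}

lemma mem_cmp_self {v x : V} (h : x ≠ v) : x ∈ Cmp G v x := Rch.refl (by simp [h])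

lemma cmp_ne {v x z : V} (h : z ∈ Cmp G v x) : z ≠ v := by
  have := (h : Rch G {v}ᶜ x z).mem_right
  simpa using this

lemma cmp_base_ne {v x z : V} (h : z ∈ Cmp G v x) : x ≠ v := by
  have := (h : Rch G {v}ᶜ x z).mem_left
  simpa using this

lemma cmp_closed {v x z z' : V} (h : z ∈ Cmp G v x) (h' : Rch G {v}ᶜ z z') :
    z' ∈ Cmp G v x := (h : Rch G {v}ᶜ x z).trans h'

lemma cmp_eq_of_mem {v x z : V} (h : z ∈ Cmp G v x) : Cmp G v z = Cmp G v x := by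
  ext t
  exact ⟨fun ht => cmp_closed h ht, fun ht => (h : Rch G {v}ᶜ x z).symm.trans ht⟩

/-- within a component one can travel inside the component -/
lemma cmp_rch {v x z : V} (h : z ∈ Cmp G v x) : Rch G (Cmp G v x) x z := by
  classical
  obtain ⟨w, hw⟩ := (h : Rch G {v}ᶜ x z)
  exact ⟨w, fun t ht => ⟨w.takeUntil t ht, fun r hr => hw r (Walk.support_takeUntil_subset _ _ hr)⟩⟩

lemma cmp_mono_other {v x b z : V} (hb : b ∉ Cmp G v x) (h : z ∈ Cmp G v x) :
    Rch G {b}ᶜ x z := by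
  refine (cmp_rch h).mono ?_
  intro t ht
  simp only [Set.mem_compl_iff, Set.mem_singleton_iff]
  rintro rfl
  exact hb ht

lemma cut_pair {v : V} (hv : IsCutVertex G v) :
    ∃ x₁ x₂, x₁ ≠ v ∧ x₂ ≠ v ∧ ¬ Rch G {v}ᶜ x₁ x₂ := by
  rw [isCutVertex_iff] at hv
  push_neg at hv
  obtain ⟨x₁, h₁, x₂, h₂, h⟩ := hv
  exact ⟨x₁, x₂, h₁, h₂, h⟩

lemma cmp_attach (hGc : RConn G Set.univ) {v x : V} (hx : x ≠ v) :
    ∃ c ∈ Cmp G v x, G.Adj c v := by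
  obtain ⟨c, hr, hadj⟩ := rconn_attach hGc (v := v) (x := x) trivial trivial hx
  exact ⟨c, hr.mono (fun z hz => hz.2), hadj⟩

section Tripod

variable (hcut2 : ∀ v : V, IsCutVertex G v →
      Nat.card ((G.induce ({v}ᶜ : Set V)).ConnectedComponent) = 2)
    (hblock : ∀ B : Set V, IsBlock G B → ({x ∈ B | IsCutVertex G x}).ncard ≤ 2)
    (hGc : RConn G Set.univ)

include hcut2 hblock hGc

lemma tripod : ∀ n : ℕ, ∀ b m₀ y₁ v₂ v₃ y₂ y₃ : V,
    (Cmp G b m₀).ncard = n →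
    IsCutVertex G b → m₀ ≠ b →
    y₁ ∉ Cmp G b m₀ → y₁ ≠ b →
    IsCutVertex G v₂ → y₂ ≠ v₂ → IsCutVertex G v₃ → y₃ ≠ v₃ →
    (∀ z ∈ Cmp G v₂ y₂, ¬ IsCutVertex G z) →
    (∀ z ∈ Cmp G v₃ y₃, ¬ IsCutVertex G z) →
    Cmp G v₂ y₂ ∩ Cmp G v₃ y₃ = ∅ →
    v₂ ≠ v₃ →
    Cmp G v₂ y₂ ⊆ Cmp G b m₀ → Cmp G v₃ y₃ ⊆ Cmp G b m₀ →
    v₂ ∈ Cmp G b m₀ → v₃ ∈ Cmp G b m₀ → False := by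
  intro n
  induction n using Nat.strong_induction_on with
  | _ n IH =>
  intro b m₀ y₁ v₂ v₃ y₂ y₃ hcard hcutb hm₀ hy₁M hy₁b hcv₂ hy₂v₂ hcv₃ hy₃v₃
    hfree₂ hfree₃ hdisj hv₂₃ hK₂M hK₃M hv₂M hv₃M
  classical
  set M := Cmp G b m₀ with hMdef
  set K₂ := Cmp G v₂ y₂ with hK₂def
  set K₃ := Cmp G v₃ y₃ with hK₃def
  have hbM : b ∉ M := fun h => (cmp_ne h) rfl
  -- neighbor of b inside M
  obtain ⟨z', hz'M, hz'adj⟩ : ∃ c ∈ M, G.Adj c b := cmp_attach hGc hm₀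
  -- the block containing edge z'-b
  obtain ⟨B, hsubB, hB⟩ := exists_block (adj_noCut hz'adj)
  have hz'B : z' ∈ B := hsubB (by simp)
  have hbB : b ∈ B := hsubB (by simp)
  have hz'b : z' ≠ b := hz'adj.ne
  -- B minus b sits inside M
  have hBM : ∀ u ∈ B, u ≠ b → u ∈ M := by
    intro u huB hub
    have := nocut_cross hB.1 huB hz'B hub hz'b
    exact cmp_closed hz'M this.symm
  -- B is disjoint from K₂ and K₃
  have hBK : ∀ (v y : V), IsCutVertex G v → y ≠ v → Cmp G v y ⊆ M → v ∈ M →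
      ∀ u ∈ B, u ∉ Cmp G v y := by
    intro v y hcv hyv hKM hvM u huB huK
    have hbK : b ∉ Cmp G v y := fun h => hbM (hKM h)
    have hbv : b ≠ v := fun h => hbM (h ▸ hvM)
    have huv : u ≠ v := cmp_ne huK
    have := nocut_cross hB.1 huB hbB huv (by exact hbv)
    exact hbK (cmp_closed huK this)
  have hBK₂ : ∀ u ∈ B, u ∉ K₂ := hBK v₂ y₂ hcv₂ hy₂v₂ hK₂M hv₂M
  have hBK₃ : ∀ u ∈ B, u ∉ K₃ := hBK v₃ y₃ hcv₃ hy₃v₃ hK₃M hv₃M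
  have hy₂K₂ : y₂ ∈ K₂ := mem_cmp_self hy₂v₂
  have hy₃K₃ : y₃ ∈ K₃ := mem_cmp_self hy₃v₃
  have hy₂B : y₂ ∉ B := fun h => hBK₂ y₂ h hy₂K₂
  have hy₃B : y₃ ∉ B := fun h => hBK₃ y₃ h hy₃K₃
  obtain ⟨b₂, hb₂B, hb₂cut, hsep₂⟩ := block_attach hB hbB hz'B hz'b.symm hGc hy₂B
  obtain ⟨b₃, hb₃B, hb₃cut, hsep₃⟩ := block_attach hB hbB hz'B hz'b.symm hGc hy₃B
  -- b itself differs from b₂ and b₃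
  have hbne : ∀ (y : V), y ∈ M → ∀ b' ∈ B, (∀ z ∈ B, z ≠ b' → ¬ Rch G {b'}ᶜ y z) →
      b ≠ b' := by
    intro y hyM b' hb'B hsep heq
    subst heq
    refine hsep z' hz'B hz'b ?_
    exact (hyM : Rch G {b}ᶜ m₀ y).symm.trans (hz'M : Rch G {b}ᶜ m₀ z')
  have hbb₂ : b ≠ b₂ := hbne y₂ (hK₂M hy₂K₂) b₂ hb₂B hsep₂
  have hbb₃ : b ≠ b₃ := hbne y₃ (hK₃M hy₃K₃) b₃ hb₃B hsep₃
  by_cases hbb : b₂ = b₃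
  · -- recurse into the component of y₂ in G - b₂
    subst hbb
    set b'' := b₂
    set M' := Cmp G b'' y₂ with hM'def
    have hy₂b'' : y₂ ≠ b'' := fun h => hBK₂ b'' hb₂B (h ▸ hy₂K₂)
    have hy₃b'' : y₃ ≠ b'' := fun h => hBK₃ b'' hb₂B (h ▸ hy₃K₃)
    have hbnotM' : b ∉ M' := by
      intro h
      exact hsep₂ b hbB hbb₂ ((h : Rch G {b''}ᶜ y₂ b))
    -- y₃ is on the same side as y₂
    have hy₂y₃ : Rch G {b''}ᶜ y₂ y₃ := by
      refine cut_two_sides hcut2 (v := b'') (a := y₂) (b := y₃) (s := b)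
        hb₂cut hbb₂ hy₂b'' hy₃b'' ?_ ?_
      · intro h; exact hsep₂ b hbB hbb₂ h.symm
      · intro h; exact hsep₃ b hbB hbb₂ h.symm
    have hK₂M' : K₂ ⊆ M' := by
      intro z hz
      exact (Rch.refl (show y₂ ∈ ({b''}ᶜ : Set V) by simp [hy₂b''])).trans
        (cmp_mono_other (hBK₂ b'' hb₂B) hz)
    have hK₃M' : K₃ ⊆ M' := by
      intro z hz
      exact hy₂y₃.trans (cmp_mono_other (hBK₃ b'' hb₂B) hz)
    have hv₂b'' : v₂ ≠ b'' := by
      intro h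
      have h1 : y₃ ∈ Cmp G b'' y₂ := hK₃M' hy₃K₃
      have h2 : y₃ ∈ Cmp G v₂ y₂ := by rw [h]; exact h1
      exact absurd (hdisj ▸ (⟨h2, hy₃K₃⟩ : y₃ ∈ K₂ ∩ K₃)) (Set.notMem_empty y₃)
    have hv₃b'' : v₃ ≠ b'' := by
      intro h
      have h2 : y₂ ∈ Cmp G v₃ y₃ := by rw [h]; exact hy₂y₃.symm
      exact absurd (hdisj ▸ (⟨hy₂K₂, h2⟩ : y₂ ∈ K₂ ∩ K₃)) (Set.notMem_empty y₂)
    have hattach : ∀ (v y : V), IsCutVertex G v → y ≠ v → v ≠ b'' →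
        Cmp G v y ⊆ M' → y ∈ M' → v ∈ M' := by
      intro v y hcv hyv hvb hKM' hyM'
      obtain ⟨c, hcK, hcadj⟩ := cmp_attach hGc hyv
      have hcM' : c ∈ M' := hKM' hcK
      refine cmp_closed hcM' (rch_adj hcadj ?_ ?_)
      · simpa using cmp_ne hcM'
      · simpa using hvb
    have hv₂M' : v₂ ∈ M' := hattach v₂ y₂ hcv₂ hy₂v₂ hv₂b'' hK₂M' (hK₂M' hy₂K₂)
    have hv₃M' : v₃ ∈ M' := hattach v₃ y₃ hcv₃ hy₃v₃ hv₃b'' hK₃M' (hK₃M' hy₃K₃)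
    -- M' is strictly smaller than M
    have hb''M : b'' ∈ M := hBM b₂ hb₂B (Ne.symm hbb₂)

    have hM'M : M' ⊆ M := by
      intro z hz
      obtain ⟨w, hw⟩ := (hz : Rch G {b''}ᶜ y₂ z)
      by_cases hbw : b ∈ w.support
      · exact absurd ⟨w.takeUntil b hbw,
          fun r hr => hw r (Walk.support_takeUntil_subset _ _ hr)⟩
          (hsep₂ b hbB hbb₂)
      · have : Rch G {b}ᶜ y₂ z := ⟨w, by
          intro r hr
          simp only [Set.mem_compl_iff, Set.mem_singleton_iff]
          rintro rfl
          exact hbw hr⟩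
        exact cmp_closed (hK₂M hy₂K₂) this
    have hssub : M' ⊂ M := by
      refine ⟨hM'M, fun hsub => ?_⟩
      have : b'' ∈ M' := hsub hb''M
      exact (cmp_ne this) rfl
    have hlt : (M').ncard < M.ncard := Set.ncard_lt_ncard hssub (Set.toFinite _)
    exact IH (M').ncard (hcard ▸ hlt) b'' y₂ b v₂ v₃ y₂ y₃ rfl hb₂cut hy₂b''
      hbnotM' hbb₂ hcv₂ hy₂v₂ hcv₃ hy₃v₃ hfree₂ hfree₃ hdisj hv₂₃ hK₂M' hK₃M' hv₂M' hv₃M'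
  · -- three distinct cut vertices in the block B
    have hcard3 : ({b, b₂, b₃} : Set V).ncard = 3 := by
      rw [Set.ncard_eq_three]
      exact ⟨b, b₂, b₃, hbb₂, hbb₃, hbb, rfl⟩
    have hsub3 : ({b, b₂, b₃} : Set V) ⊆ {x ∈ B | IsCutVertex G x} := by
      rintro x (rfl | rfl | rfl)
      · exact ⟨hbB, hcutb⟩
      · exact ⟨hb₂B, hb₂cut⟩
      · exact ⟨hb₃B, hb₃cut⟩
    have h3 : 3 ≤ ({x ∈ B | IsCutVertex G x}).ncard := by
      rw [← hcard3]
      exact Set.ncard_le_ncard hsub3 (Set.toFinite _)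
    have := hblock B hB
    omega

end Tripod


section MinPiece

variable (hGc : RConn G Set.univ)
include hGc

lemma exists_min_piece (Q : Set V → Prop)
    (hne : ∃ v x, IsCutVertex G v ∧ x ≠ v ∧ Q (Cmp G v x))
    (hdown : ∀ K, Q K → ∀ K' ⊆ K, Q K') :
    ∃ v x, IsCutVertex G v ∧ x ≠ v ∧ Q (Cmp G v x) ∧
      ∀ z ∈ Cmp G v x, ¬ IsCutVertex G z := by
  classical
  set S : Set (Set V) :=
    {K | (∃ v x, IsCutVertex G v ∧ x ≠ v ∧ K = Cmp G v x) ∧ Q K} with hSdef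
  have hSne : S.Nonempty := by
    obtain ⟨v, x, hv, hx, hQ⟩ := hne
    exact ⟨Cmp G v x, ⟨v, x, hv, hx, rfl⟩, hQ⟩
  obtain ⟨K, hKS, hKmin⟩ := exists_minimal_wrt_port Set.ncard S (Set.toFinite _) hSne
  obtain ⟨⟨v, x, hv, hx, rfl⟩, hQK⟩ := hKS
  refine ⟨v, x, hv, hx, hQK, ?_⟩
  intro w hwK hwcut
  have hwv : w ≠ v := cmp_ne hwK
  -- everything outside the piece can reach v avoiding w
  have houtside : ∀ r, r ∉ Cmp G v x → r ≠ w → r ≠ v → Rch G {w}ᶜ r v := by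
    intro r hr hrw hrv
    have hdisjr : Cmp G v r ∩ Cmp G v x = ∅ := by
      ext z
      simp only [Set.mem_inter_iff, Set.mem_empty_iff_false, iff_false, not_and]
      intro hz1 hz2
      have e12 : Cmp G v r = Cmp G v x := (cmp_eq_of_mem hz1).symm.trans (cmp_eq_of_mem hz2)
      exact hr (e12 ▸ mem_cmp_self (cmp_base_ne hz1))
    obtain ⟨c, hcC, hcadj⟩ := cmp_attach hGc hrv
    have hwC : w ∉ Cmp G v r := by
      intro h
      exact absurd (hdisjr ▸ (⟨h, hwK⟩ : w ∈ Cmp G v r ∩ Cmp G v x)) (Set.notMem_empty w)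
    refine (cmp_mono_other hwC hcC).trans (rch_adj hcadj ?_ ?_)
    · simp only [Set.mem_compl_iff, Set.mem_singleton_iff]
      intro h
      exact hwC (h ▸ hcC)
    · simpa using hwv.symm
  obtain ⟨z₁, z₂, hz₁, hz₂, hnr⟩ := cut_pair hwcut
  have hpick : ∃ u, u ≠ w ∧ ¬ Rch G {w}ᶜ u v := by
    by_cases h1 : Rch G {w}ᶜ z₁ v
    · by_cases h2 : Rch G {w}ᶜ z₂ v
      · exact absurd (h1.trans h2.symm) hnr
      · exact ⟨z₂, hz₂, h2⟩
    · exact ⟨z₁, hz₁, h1⟩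
  obtain ⟨u, huw, hunr⟩ := hpick
  have huK : u ∈ Cmp G v x := by
    by_contra huK
    by_cases huv : u = v
    · exact hunr (huv ▸ Rch.refl (by simpa using huw))
    · exact hunr (houtside u huK huw huv)
  have hMsub : Cmp G w u ⊆ Cmp G v x := by
    intro z hz
    by_contra hzK
    have hzw : z ≠ w := cmp_ne hz
    by_cases hzv : z = v
    · exact hunr (hzv ▸ (hz : Rch G {w}ᶜ u z))
    · exact hunr ((hz : Rch G {w}ᶜ u z).trans (houtside z hzK hzw hzv))
  have hssub : Cmp G w u ⊂ Cmp G v x := by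
    refine ⟨hMsub, fun h => ?_⟩
    exact (cmp_ne (h hwK) : w ≠ w) rfl
  have hlt := Set.ncard_lt_ncard hssub (Set.toFinite _)
  have := hKmin (Cmp G w u) ⟨⟨w, u, hwcut, huw, rfl⟩, hdown _ hQK _ hMsub⟩ hlt.le
  omega

end MinPiece

section ExistsST

variable (hcut2 : ∀ v : V, IsCutVertex G v →
      Nat.card ((G.induce ({v}ᶜ : Set V)).ConnectedComponent) = 2)
    (hblock : ∀ B : Set V, IsBlock G B → ({x ∈ B | IsCutVertex G x}).ncard ≤ 2)
    (hGc : RConn G Set.univ)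

include hcut2 hblock hGc

lemma exists_st (h2 : 1 < Fintype.card V) :
    ∃ s t, s ≠ t ∧ ¬ IsCutVertex G s ∧ ¬ IsCutVertex G t ∧
      ∀ v, IsCutVertex G v → ¬ Rch G {v}ᶜ s t := by
  classical
  by_cases hcuts : ∃ v, IsCutVertex G v
  · obtain ⟨v₀, hv₀⟩ := hcuts
    obtain ⟨x₁, x₂, h₁, -, -⟩ := cut_pair hv₀
    obtain ⟨vs, s, hvs, hsvs, -, hKsfree⟩ := exists_min_piece hGc (fun _ => True)
      ⟨v₀, x₁, hv₀, h₁, trivial⟩ (fun _ _ _ _ => trivial)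
    have hsKs : s ∈ Cmp G vs s := mem_cmp_self hsvs
    -- pick a vertex on the other side of vs
    obtain ⟨y₁, y₂, hy₁, hy₂, hynr⟩ := cut_pair hvs
    have hpick : ∃ u, u ≠ vs ∧ ¬ Rch G {vs}ᶜ s u := by
      by_cases hA : Rch G {vs}ᶜ s y₁
      · by_cases hB : Rch G {vs}ᶜ s y₂
        · exact absurd (hA.symm.trans hB) hynr
        · exact ⟨y₂, hy₂, hB⟩
      · exact ⟨y₁, hy₁, hA⟩
    obtain ⟨u, huvs, hu⟩ := hpick
    have hudisj : Cmp G vs u ∩ Cmp G vs s = ∅ := by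
      ext z
      simp only [Set.mem_inter_iff, Set.mem_empty_iff_false, iff_false, not_and]
      intro hz1 hz2
      exact hu ((hz2 : Rch G {vs}ᶜ s z).trans (hz1 : Rch G {vs}ᶜ u z).symm)
    obtain ⟨vt, t, hvt, htvt, hKtdisj, hKtfree⟩ := exists_min_piece hGc
      (fun K => K ∩ Cmp G vs s = ∅) ⟨vs, u, hvs, huvs, hudisj⟩
      (by
        intro K hQ K' hK'
        ext z
        simp only [Set.mem_inter_iff, Set.mem_empty_iff_false, iff_false, not_and]
        intro hz1 hz2
        exact absurd (hQ ▸ (⟨hK' hz1, hz2⟩ : z ∈ K ∩ Cmp G vs s)) (Set.notMem_empty z))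
    have htKt : t ∈ Cmp G vt t := mem_cmp_self htvt
    have hst : s ≠ t := by
      intro h
      exact absurd (hKtdisj ▸ (⟨h ▸ htKt, hsKs⟩ : s ∈ Cmp G vt t ∩ Cmp G vs s))
        (Set.notMem_empty s)
    refine ⟨s, t, hst, hKsfree s hsKs, hKtfree t htKt, ?_⟩
    intro v hv hR
    have hsv : s ≠ v := fun h => hKsfree s hsKs (h ▸ hv)
    have htv : t ≠ v := fun h => hKtfree t htKt (h ▸ hv)
    have hvKs : v ∉ Cmp G vs s := fun h => hKsfree v h hv
    have hvKt : v ∉ Cmp G vt t := fun h => hKtfree v h hv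
    have hvvs : v ≠ vs := by
      intro h
      have ht' : t ∈ Cmp G vs s := by rw [← h]; exact hR
      exact absurd (hKtdisj ▸ (⟨htKt, ht'⟩ : t ∈ Cmp G vt t ∩ Cmp G vs s))
        (Set.notMem_empty t)
    have hvvt : v ≠ vt := by
      intro h
      have hs' : s ∈ Cmp G vt t := by rw [← h]; exact hR.symm
      exact absurd (hKtdisj ▸ (⟨hs', hsKs⟩ : s ∈ Cmp G vt t ∩ Cmp G vs s))
        (Set.notMem_empty s)
    have hKsM : Cmp G vs s ⊆ Cmp G v s := fun z hz => cmp_mono_other hvKs hz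
    have hKtM : Cmp G vt t ⊆ Cmp G v s := fun z hz => hR.trans (cmp_mono_other hvKt hz)
    by_cases hvsvt : vs = vt
    · have hnst : ¬ Rch G {vs}ᶜ s t := by
        intro h
        exact absurd (hKtdisj ▸ (⟨htKt, (h : t ∈ Cmp G vs s)⟩ : t ∈ Cmp G vt t ∩ Cmp G vs s))
          (Set.notMem_empty t)
      by_cases hq : Rch G {vs}ᶜ s v
      · exact hKsfree v hq hv
      · have hvt' := cut_two_sides hcut2 (v := vs) (a := v) (b := t) (s := s) hvs hsvs hvvs
          (by rw [hvsvt]; exact htvt) hq hnst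
        have : v ∈ Cmp G vt t := by rw [← hvsvt]; exact hvt'.symm
        exact hKtfree v this hv
    · obtain ⟨z₁, z₂, hz₁, hz₂, hznr⟩ := cut_pair hv
      have hpick' : ∃ u', u' ≠ v ∧ ¬ Rch G {v}ᶜ s u' := by
        by_cases hA : Rch G {v}ᶜ s z₁
        · by_cases hB : Rch G {v}ᶜ s z₂
          · exact absurd (hA.symm.trans hB) hznr
          · exact ⟨z₂, hz₂, hB⟩
        · exact ⟨z₁, hz₁, hA⟩
      obtain ⟨u', hu'v, hu'⟩ := hpick'
      have hDdisjM : Cmp G v u' ∩ Cmp G v s = ∅ := by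
        ext z
        simp only [Set.mem_inter_iff, Set.mem_empty_iff_false, iff_false, not_and]
        intro hz1 hz2
        exact hu' ((hz2 : Rch G {v}ᶜ s z).trans (hz1 : Rch G {v}ᶜ u' z).symm)
      obtain ⟨vD, yD, hvD, hyDvD, hDsub, hDfree⟩ := exists_min_piece hGc
        (fun K => K ⊆ Cmp G v u') ⟨v, u', hv, hu'v, subset_rfl⟩
        (fun K hQ K' hK' => hK'.trans hQ)
      have hyDD : yD ∈ Cmp G v u' := hDsub (mem_cmp_self hyDvD)
      have hyDM : yD ∉ Cmp G v s := by
        intro h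
        exact absurd (hDdisjM ▸ (⟨hyDD, h⟩ : yD ∈ Cmp G v u' ∩ Cmp G v s))
          (Set.notMem_empty yD)
      have hyDv : yD ≠ v := cmp_ne hyDD
      have hattach : ∀ (vv y : V), y ≠ vv → vv ≠ v → Cmp G vv y ⊆ Cmp G v s →
          vv ∈ Cmp G v s := by
        intro vv y hyvv hvvv hsub
        obtain ⟨c, hcC, hcadj⟩ := cmp_attach hGc hyvv
        exact cmp_closed (hsub hcC)
          (rch_adj hcadj (by simpa using cmp_ne (hsub hcC)) (by simpa using hvvv))
      have hvsM : vs ∈ Cmp G v s := hattach vs s hsvs (Ne.symm hvvs) hKsM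
      have hvtM : vt ∈ Cmp G v s := hattach vt t htvt (Ne.symm hvvt) hKtM
      have hdisj' : Cmp G vs s ∩ Cmp G vt t = ∅ := by
        rw [Set.inter_comm]; exact hKtdisj
      exact tripod hcut2 hblock hGc (Cmp G v s).ncard v s yD vs vt s t rfl hv hsv
        hyDM hyDv hvs hsvs hvt htvt hKsfree hKtfree hdisj' hvsvt hKsM hKtM hvsM hvtM
  · push_neg at hcuts
    have : Nonempty V := Fintype.card_pos_iff.mp (by omega)
    obtain ⟨s⟩ := this
    obtain ⟨t, hts⟩ := Fintype.exists_ne_of_one_lt_card h2 s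
    exact ⟨s, t, hts.symm, hcuts s, hcuts t, fun v hv => absurd hv (hcuts v)⟩

end ExistsST


/-- general prefix-closure of reachability -/
lemma rch_comp {S : Set V} {x z : V} (h : Rch G S x z) :
    Rch G {t | Rch G S x t} x z := by
  classical
  obtain ⟨w, hw⟩ := h
  exact ⟨w, fun t ht =>
    ⟨w.takeUntil t ht, fun r hr => hw r (Walk.support_takeUntil_subset _ _ hr)⟩⟩

variable (G) in
/-- the invariant for the ordering construction -/
def Cinv (S : Finset V) (s : V) (A : Finset V) : Prop :=
  ∀ v ∈ S, ∀ x ∈ S, x ≠ v → (v = s ∨ ¬ Rch G ((↑S : Set V) \ {v}) s x) →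
    ∃ a ∈ A, a ≠ v ∧ Rch G ((↑S : Set V) \ {v}) x a

lemma avoid_of_not_reach {S : Set V} {x a z : V} (h : Rch G S x z)
    (hna : ¬ Rch G S x a) : Rch G (S \ {a}) x z := by
  classical
  obtain ⟨w, hw⟩ := h
  by_cases hmem : a ∈ w.support
  · exact absurd ⟨w.takeUntil a hmem,
      fun r hr => hw r (Walk.support_takeUntil_subset _ _ hr)⟩ hna
  · refine ⟨w, fun t ht => ⟨hw t ht, ?_⟩⟩
    simp only [Set.mem_singleton_iff]
    rintro rfl
    exact hmem ht


lemma rch_first_step {S : Set V} {x y : V} (h : Rch G S x y) (hxy : x ≠ y) :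
    ∃ z ∈ S, G.Adj x z := by
  obtain ⟨w, hw⟩ := h
  cases w with
  | nil => exact absurd rfl hxy
  | cons h' w' => exact ⟨_, hw _ (by simp), h'⟩

lemma build_list [DecidableEq V] : ∀ n : ℕ, ∀ (S A : Finset V) (s : V), S.card = n → s ∈ S → A ⊆ S →
    A.Nonempty → RConn G (↑S : Set V) → Cinv G S s A →
    ∃ l : List V, l.Nodup ∧ l.toFinset = S ∧ l.head? = some s ∧
      (∀ k : ℕ, 0 < k → RConn G {z | z ∈ l.take k}) ∧
      (∀ k : ℕ, ∀ x ∈ l.drop k, ∃ a ∈ A, Rch G {z | z ∈ l.drop k} x a) := by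
  intro n
  induction n using Nat.strong_induction_on with
  | _ n IH =>
  intro S A s hcard hsS hAS hAne hconn hCinv
  classical
  rcases Nat.lt_or_ge n 2 with hn | hn
  · -- base case : S = {s}
    have hn1 : S.card = 1 := by
      have : 0 < S.card := Finset.card_pos.mpr ⟨s, hsS⟩
      omega
    obtain ⟨c, hc⟩ := Finset.card_eq_one.mp hn1
    have hsc : c = s := by
      have h := hsS; rw [hc] at h; exact (Finset.mem_singleton.mp h).symm
    rw [hsc] at hc
    refine ⟨[s], by simp, by simp [hc], rfl, ?_, ?_⟩
    · intro k hk x hx y hy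
      have hx' : x ∈ [s].take k := hx
      have hy' : y ∈ [s].take k := hy
      have hxs : x = s := by
        cases k with
        | zero => omega
        | succ m => simpa using hx'
      have hys : y = s := by
        cases k with
        | zero => omega
        | succ m => simpa using hy'
      rw [hxs, hys]
      exact Rch.refl (hxs ▸ hx)
    · intro k x hx
      have hAs : A = {s} := by
        apply Finset.Subset.antisymm
        · rw [← hc]; exact hAS
        · intro z hz
          obtain ⟨a, ha⟩ := hAne
          have := hAS ha
          rw [hc] at this
          have has : a = s := by simpa using this
          simp only [Finset.mem_singleton] at hz
          rw [hz, ← has]; exact ha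
      cases k with
      | zero =>
        have hxs : x = s := by simpa using hx
        exact ⟨s, by simp [hAs], hxs ▸ Rch.refl (by simpa using hx)⟩
      | succ m => simp at hx
  · -- inductive step
    set T : Set V := (↑S : Set V) with hTdef
    -- minimal piece avoiding s
    have hPne : ∃ K : Set V, ∃ v ∈ S, ∃ x ∈ S, x ≠ v ∧
        K = {z | Rch G (T \ {v}) x z} ∧ s ∉ K := by
      obtain ⟨x₀, hx₀S, hx₀s⟩ : ∃ x₀ ∈ S, x₀ ≠ s := by
        have : 1 < S.card := by omega
        obtain ⟨x₀, hx₀, hne⟩ := Finset.exists_mem_ne this s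
        exact ⟨x₀, hx₀, hne⟩
      refine ⟨_, s, hsS, x₀, hx₀S, hx₀s, rfl, ?_⟩
      intro hs
      exact (hs : Rch G (T \ {s}) x₀ s).mem_right.2 rfl
    obtain ⟨K, hKP, hKmin⟩ := exists_minimal_wrt_port Set.ncard
      {K : Set V | ∃ v ∈ S, ∃ x ∈ S, x ≠ v ∧ K = {z | Rch G (T \ {v}) x z} ∧ s ∉ K}
      (Set.toFinite _) hPne
    obtain ⟨v, hvS, x, hxS, hxv, hKeq, hsK⟩ := hKP
    have hxK : x ∈ K := by
      rw [hKeq]; exact Rch.refl ⟨by exact hxS, by simpa using hxv⟩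
    -- get the removable vertex a ∈ A ∩ K
    have htrig : v = s ∨ ¬ Rch G (T \ {v}) s x := by
      by_cases hvs : v = s
      · exact Or.inl hvs
      · refine Or.inr fun h => hsK ?_
        rw [hKeq]
        exact h.symm
    obtain ⟨a, haA, hav, haK'⟩ := hCinv v hvS x hxS hxv htrig
    have haK : a ∈ K := by rw [hKeq]; exact haK'
    have has : a ≠ s := fun h => hsK (h ▸ haK)
    have haS : a ∈ S := hAS haA
    have hKT : K ⊆ T \ {v} := by
      rw [hKeq]; intro z hz; exact (hz : Rch G (T \ {v}) x z).mem_right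
    -- K is "closed" : no member of K reaches outside K within T \ {v}
    have hKclosed : ∀ z ∈ K, ∀ z', Rch G (T \ {v}) z z' → z' ∈ K := by
      intro z hz z' hr
      rw [hKeq] at hz ⊢
      exact (hz : Rch G (T \ {v}) x z).trans hr
    -- everything outside K reaches v avoiding a
    have houtK : ∀ r ∈ T, r ∉ K → r ≠ a → Rch G (T \ {a}) r v := by
      intro r hrT hrK hra
      by_cases hrv : r = v
      · cases hrv
        exact Rch.refl ⟨hrT, by simpa using hra⟩
      · obtain ⟨c, hc, hcadj⟩ := rconn_attach hconn (v := v) (x := r)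
          (by exact hvS) hrT hrv
        have hCdisj : ∀ t, Rch G (T \ {v}) r t → t ∉ K := by
          intro t hrt htK
          exact hrK (hKclosed t htK r hrt.symm)
        have hstep : Rch G (T \ {a}) r c := by
          refine (rch_comp hc).mono ?_
          intro t ht
          have htK : t ∉ K := hCdisj t ht
          have htT : t ∈ T := (ht : Rch G (T \ {v}) r t).mem_right.1
          refine ⟨htT, ?_⟩
          simp only [Set.mem_singleton_iff]
          rintro rfl
          exact htK haK
        refine hstep.trans (rch_adj hcadj hstep.mem_right ?_)
        refine ⟨by exact hvS, ?_⟩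
        simp only [Set.mem_singleton_iff]
        exact fun h => hav h.symm
    -- connectivity of T \ {a}
    have hconn' : RConn G (T \ {a}) := by
      have hreach : ∀ u ∈ T \ {a}, Rch G (T \ {a}) u s := by
        by_contra hbad
        push_neg at hbad
        obtain ⟨u, huT, hnus⟩ := hbad
        have hMdisj : ∀ z, Rch G (T \ {a}) u z → z ∉ K → False := by
          intro z hz hzK
          have hzT : z ∈ T := hz.mem_right.1
          have hza : z ≠ a := by have := hz.mem_right.2; simpa using this
          have h1 : Rch G (T \ {a}) z v := houtK z hzT hzK hza
          have h2 : Rch G (T \ {a}) s v := houtK s (by exact hsS) hsK has.symm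
          exact hnus (hz.trans (h1.trans h2.symm))
        have hMK : {z | Rch G (T \ {a}) u z} ⊆ K :=
          fun z hz => by_contra fun h => hMdisj z hz h
        have haM : a ∉ {z | Rch G (T \ {a}) u z} := by
          intro h
          have := (h : Rch G (T \ {a}) u a).mem_right.2
          simp at this
        have hua : u ≠ a := by have := huT.2; simpa using this
        have hlt : ({z | Rch G (T \ {a}) u z}).ncard < K.ncard := by
          refine Set.ncard_lt_ncard ⟨hMK, fun h => haM (h haK)⟩ (Set.toFinite _)
        have hmem : {z | Rch G (T \ {a}) u z} ∈
            {K : Set V | ∃ v ∈ S, ∃ x ∈ S, x ≠ v ∧ K = {z | Rch G (T \ {v}) x z} ∧ s ∉ K} := by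
          refine ⟨a, haS, u, ?_, hua, rfl, ?_⟩
          · exact huT.1
          · intro h
            exact hnus (h : Rch G (T \ {a}) u s)
        have := hKmin _ hmem hlt.le
        omega
      intro u hu u' hu'
      exact (hreach u hu).trans (hreach u' hu').symm
    -- the smaller instance
    set S' : Finset V := S.erase a with hS'def
    have hS'coe : (↑S' : Set V) = T \ {a} := by
      rw [hS'def, Finset.coe_erase]
    have hsS' : s ∈ S' := Finset.mem_erase.mpr ⟨has.symm, hsS⟩
    set N : Finset V := S'.filter (fun z => G.Adj a z) with hNdef
    set A' : Finset V := (A.erase a) ∪ N with hA'def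
    have hA'S' : A' ⊆ S' := by
      intro z hz
      rcases Finset.mem_union.mp hz with h | h
      · exact Finset.mem_erase.mpr ⟨(Finset.mem_erase.mp h).1, hAS (Finset.mem_erase.mp h).2⟩
      · exact (Finset.mem_filter.mp h).1
    have hA'ne : A'.Nonempty := by
      obtain ⟨x₀, hx₀S, hx₀a⟩ : ∃ x₀ ∈ S, x₀ ≠ a := by
        have h1 : 1 < S.card := by omega
        obtain ⟨x₀, h2, h3⟩ := Finset.exists_mem_ne h1 a
        exact ⟨x₀, h2, h3⟩
      have hr : Rch G T a x₀ := hconn a (by exact haS) x₀ (by exact hx₀S)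
      obtain ⟨z₀, hz₀T, hadj₀⟩ := rch_first_step hr (Ne.symm hx₀a)
      refine ⟨z₀, Finset.mem_union.mpr (Or.inr (Finset.mem_filter.mpr ⟨?_, hadj₀⟩))⟩
      exact Finset.mem_erase.mpr ⟨hadj₀.ne', by exact hz₀T⟩
    have hCinv' : Cinv G S' s A' := by
      intro v' hv'S' x' hx'S' hx'v' htrig'
      have hv'S : v' ∈ S := (Finset.mem_erase.mp hv'S').2
      have hx'S : x' ∈ S := (Finset.mem_erase.mp hx'S').2
      have hx'a : x' ≠ a := (Finset.mem_erase.mp hx'S').1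
      have hv'a : v' ≠ a := (Finset.mem_erase.mp hv'S').1
      have hsetEq : (↑S' : Set V) \ {v'} = (T \ {v'}) \ {a} := by
        rw [hS'coe]; exact Set.diff_diff_comm
      by_cases hcase : Rch G (T \ {v'}) x' a
      · obtain ⟨w, hw⟩ := hcase
        obtain ⟨c, b, hbB, hbS, hadjc, hrc⟩ := exists_door (B := {a}) w hw
          (by simpa using hx'a) rfl
        obtain rfl : b = a := hbB
        have hcmem := hrc.mem_right
        refine ⟨c, ?_, ?_, ?_⟩
        · refine Finset.mem_union.mpr (Or.inr (Finset.mem_filter.mpr ⟨?_, hadjc.symm⟩))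
          refine Finset.mem_erase.mpr ⟨?_, ?_⟩
          · intro h; exact hcmem.2 (by simp [h])
          · exact hcmem.1.1
        · intro h; exact hcmem.1.2 (by simp [h])
        · rw [hsetEq]; exact hrc
      · have htrigS : v' = s ∨ ¬ Rch G (T \ {v'}) s x' := by
          rcases htrig' with h | h
          · exact Or.inl h
          · refine Or.inr fun hR => ?_
            by_cases hmem : Rch G ((T \ {v'}) \ {a}) s x'
            · exact h (by rw [hsetEq]; exact hmem)
            · obtain ⟨w, hw⟩ := hR
              by_cases hain : a ∈ w.support
              · exact hcase (Rch.symm ⟨w.dropUntil a hain,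
                  fun r hr => hw r (Walk.support_dropUntil_subset _ _ hr)⟩)
              · refine hmem ⟨w, fun r hr => ⟨hw r hr, ?_⟩⟩
                simp only [Set.mem_singleton_iff]
                rintro rfl
                exact hain hr
        obtain ⟨a₀, ha₀A, ha₀v', ha₀r⟩ := hCinv v' hv'S x' hx'S hx'v' htrigS
        have ha₀a : a₀ ≠ a := fun h => hcase (h ▸ ha₀r)
        refine ⟨a₀, Finset.mem_union.mpr (Or.inl (Finset.mem_erase.mpr ⟨ha₀a, ha₀A⟩)),
          ha₀v', ?_⟩
        rw [hsetEq]
        exact avoid_of_not_reach ha₀r hcase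
    have hcard' : S'.card = n - 1 := by
      rw [hS'def, Finset.card_erase_of_mem haS, hcard]
    have hconn'' : RConn G (↑S' : Set V) := by rw [hS'coe]; exact hconn'
    obtain ⟨l', hnd', hfin', hhd', hpre', hsuf'⟩ :=
      IH (n-1) (by omega) S' A' s hcard' hsS' hA'S' hA'ne hconn'' hCinv'
    have hal' : a ∉ l' := by
      intro h
      have : a ∈ S' := by rw [← hfin']; exact List.mem_toFinset.mpr h
      exact (Finset.mem_erase.mp this).1 rfl
    have hl'ne : l' ≠ [] := by
      intro h
      rw [h] at hfin'
      exact absurd hsS' (by rw [← hfin']; simp)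
    have hfinAll : (l' ++ [a]).toFinset = S := by
      rw [List.toFinset_append, hfin']
      ext z
      simp only [Finset.mem_union, Finset.mem_erase, List.toFinset_cons, List.toFinset_nil,
        insert_empty_eq, Finset.mem_insert, Finset.notMem_empty, or_false, hS'def,
        Finset.mem_singleton]
      constructor
      · rintro (⟨h1, h2⟩ | rfl)
        · exact h2
        · exact haS
      · intro hz
        by_cases hza : z = a
        · exact Or.inr hza
        · exact Or.inl ⟨hza, hz⟩
    refine ⟨l' ++ [a], ?_, hfinAll, ?_, ?_, ?_⟩
    · rw [List.nodup_append]
      exact ⟨hnd', List.nodup_singleton a, by simpa using fun b hb (h : b = a) => hal' (h ▸ hb)⟩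
    · rw [List.head?_append_of_ne_nil _ hl'ne]; exact hhd'
    · intro k hk
      by_cases hkl : k ≤ l'.length
      · rw [List.take_append_of_le_length hkl]
        exact hpre' k hk
      · have hk2 : (l' ++ [a]).length ≤ k := by
          simp only [List.length_append, List.length_singleton]
          omega
        rw [List.take_of_length_le hk2]
        have hset : {z : V | z ∈ l' ++ [a]} = T := by
          ext z
          simp only [Set.mem_setOf_eq, ← List.mem_toFinset, hfinAll]
          exact Iff.rfl
        rw [hset]
        exact hconn
    · intro k xx hxx
      by_cases hkl : k ≤ l'.length
      · rw [List.drop_append_of_le_length hkl] at hxx ⊢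
        have haD : a ∈ {z : V | z ∈ l'.drop k ++ [a]} := by simp
        by_cases hra : Rch G {z : V | z ∈ l'.drop k ++ [a]} xx a
        · exact ⟨a, haA, hra⟩
        · have hxx' : xx ∈ l'.drop k := by
            rcases List.mem_append.mp hxx with h | h
            · exact h
            · exfalso
              apply hra
              have hxa : xx = a := by simpa using h
              rw [hxa]
              exact Rch.refl haD
          obtain ⟨a', ha'A', ha'r⟩ := hsuf' k xx hxx'
          have hsub : {z : V | z ∈ l'.drop k} ⊆ {z : V | z ∈ l'.drop k ++ [a]} :=
            fun z hz => List.mem_append_left _ hz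
          rcases Finset.mem_union.mp ha'A' with h | h
          · exact ⟨a', (Finset.mem_erase.mp h).2, ha'r.mono hsub⟩
          · exfalso
            apply hra
            exact (ha'r.mono hsub).trans
              (rch_adj (Finset.mem_filter.mp h).2.symm (hsub ha'r.mem_right) haD)
      · have hdropnil : (l' ++ [a]).drop k = [] := by
          apply List.drop_eq_nil_of_le
          simp only [List.length_append, List.length_singleton]
          omega
        rw [hdropnil] at hxx
        simp at hxx



lemma rconn_univ (hG : G.Connected) : RConn G Set.univ := by
  intro x _ y _
  obtain ⟨w⟩ := hG.preconnected x y
  exact ⟨w, fun z _ => trivial⟩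

theorem main_result (hG : G.Connected)
    (hcut2 : ∀ v : V, IsCutVertex G v →
      Nat.card ((G.induce ({v}ᶜ : Set V)).ConnectedComponent) = 2)
    (hblock : ∀ B : Set V, IsBlock G B → ({x ∈ B | IsCutVertex G x}).ncard ≤ 2) :
    ∃ e : Fin (Fintype.card V) ≃ V,
      ∀ i : Fin (Fintype.card V), (i : ℕ) < Fintype.card V - 1 →
        (G.induce {x : V | ∃ j : Fin (Fintype.card V), j ≤ i ∧ e j = x}).Connected ∧
        (G.induce {x : V | ∃ j : Fin (Fintype.card V), i < j ∧ e j = x}).Connected := by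
  classical
  by_cases hsmall : Fintype.card V < 2
  · refine ⟨(Fintype.equivFin V).symm, ?_⟩
    intro i hi
    have : (i : ℕ) < Fintype.card V := i.isLt
    omega
  · push_neg at hsmall
    have hGc : RConn G Set.univ := rconn_univ hG
    obtain ⟨s, t, hst, hsnc, htnc, hsep⟩ := exists_st hcut2 hblock hGc (by omega)
    have hcompl : ∀ v : V, ((Finset.univ : Finset V) : Set V) \ {v} = ({v}ᶜ : Set V) := by
      intro v
      rw [Finset.coe_univ, ← Set.compl_eq_univ_diff]
    have hCinv : Cinv G Finset.univ s {t} := by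
      intro v hv x hx hxv htrig
      rw [hcompl v] at htrig ⊢
      by_cases hcut : IsCutVertex G v
      · have hsv : s ≠ v := fun h => hsnc (h ▸ hcut)
        have htv : t ≠ v := fun h => htnc (h ▸ hcut)
        have hnsx : ¬ Rch G {v}ᶜ s x := by
          rcases htrig with h | h
          · exact absurd h.symm hsv
          · exact h
        have := cut_two_sides hcut2 (v := v) (a := x) (b := t) (s := s)
          hcut hsv hxv htv hnsx (hsep v hcut)
        exact ⟨t, Finset.mem_singleton_self t, htv, this⟩
      · by_cases hvs : v = s
        · subst hvs
          have htv : t ≠ v := Ne.symm hst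
          exact ⟨t, Finset.mem_singleton_self t, htv, not_cut_rch hcut hxv htv⟩
        · rcases htrig with h | h
          · exact absurd h hvs
          · exact absurd (not_cut_rch hcut (fun hE => hvs hE.symm) hxv) h
    obtain ⟨l, hnd, hfin, hhd, hpre, hsuf⟩ := build_list (Fintype.card V)
      Finset.univ {t} s (by simp) (Finset.mem_univ s) (Finset.subset_univ _)
      ⟨t, Finset.mem_singleton_self t⟩ (by rw [Finset.coe_univ]; exact hGc) hCinv
    have hlen : l.length = Fintype.card V := by
      rw [← List.toFinset_card_of_nodup hnd, hfin]
      exact Finset.card_univ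
    have hinj : Function.Injective (fun i : Fin (Fintype.card V) =>
        l.get (Fin.cast hlen.symm i)) := by
      intro i j h
      have := List.nodup_iff_injective_get.mp hnd h
      exact Fin.cast_injective _ this
    have hbij : Function.Bijective (fun i : Fin (Fintype.card V) =>
        l.get (Fin.cast hlen.symm i)) := by
      rw [Fintype.bijective_iff_injective_and_card]
      exact ⟨hinj, by simp⟩
    refine ⟨Equiv.ofBijective _ hbij, ?_⟩
    intro i hi
    have hEapp : ∀ j : Fin (Fintype.card V),
        (Equiv.ofBijective _ hbij) j = l.get (Fin.cast hlen.symm j) := fun j => rfl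
    -- prefix set identification
    have hpreset : {x : V | ∃ j : Fin (Fintype.card V), j ≤ i ∧
        (Equiv.ofBijective _ hbij) j = x} = {z : V | z ∈ l.take ((i : ℕ) + 1)} := by
      ext x
      simp only [Set.mem_setOf_eq]
      constructor
      · rintro ⟨j, hji, rfl⟩
        rw [hEapp]
        have hj1 : (j : ℕ) < (l.take ((i : ℕ) + 1)).length := by
          rw [List.length_take]
          have h1 : (j : ℕ) ≤ (i : ℕ) := hji
          have h2 : (j : ℕ) < l.length := by rw [hlen]; exact j.isLt
          omega
        have heq : (l.take ((i : ℕ) + 1))[(j : ℕ)]'hj1 = l.get (Fin.cast hlen.symm j) := by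
          simp [List.getElem_take, List.get_eq_getElem]
        exact List.mem_iff_getElem.mpr ⟨(j : ℕ), hj1, heq⟩
      · intro hx
        obtain ⟨m, hm, hmx⟩ := List.mem_iff_getElem.mp hx
        have hm' : m < l.length := by
          rw [List.length_take] at hm
          omega
        have hmi : m ≤ (i : ℕ) := by
          rw [List.length_take] at hm
          omega
        have hmcard : m < Fintype.card V := by rw [hlen] at hm'; exact hm'
        refine ⟨⟨m, hmcard⟩, hmi, ?_⟩
        rw [hEapp]
        simp only [List.getElem_take] at hmx
        simp only [List.get_eq_getElem]
        exact hmx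
    -- suffix set identification
    have hsufset : {x : V | ∃ j : Fin (Fintype.card V), i < j ∧
        (Equiv.ofBijective _ hbij) j = x} = {z : V | z ∈ l.drop ((i : ℕ) + 1)} := by
      ext x
      simp only [Set.mem_setOf_eq]
      constructor
      · rintro ⟨j, hji, rfl⟩
        rw [hEapp]
        have hj : (i : ℕ) + 1 ≤ (j : ℕ) := hji
        have hjl : (j : ℕ) < l.length := by rw [hlen]; exact j.isLt
        have hidx : (j : ℕ) - ((i : ℕ) + 1) < (l.drop ((i : ℕ) + 1)).length := by
          rw [List.length_drop]
          omega
        have heq : (l.drop ((i : ℕ) + 1))[(j : ℕ) - ((i : ℕ) + 1)]'hidx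
            = l.get (Fin.cast hlen.symm j) := by
          simp only [List.getElem_drop, List.get_eq_getElem, Fin.coe_cast]
          congr 1
          omega
        exact List.mem_iff_getElem.mpr ⟨(j : ℕ) - ((i : ℕ) + 1), hidx, heq⟩
      · intro hx
        obtain ⟨m, hm, hmx⟩ := List.mem_iff_getElem.mp hx
        rw [List.getElem_drop] at hmx
        have hml : (i : ℕ) + 1 + m < l.length := by
          rw [List.length_drop] at hm
          omega
        have hmcard : (i : ℕ) + 1 + m < Fintype.card V := by rw [hlen] at hml; exact hml
        refine ⟨⟨(i : ℕ) + 1 + m, hmcard⟩, ?_, ?_⟩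
        · show (i : ℕ) < (i : ℕ) + 1 + m
          omega
        · rw [hEapp]
          simp only [List.get_eq_getElem]
          exact hmx
    constructor
    · rw [hpreset, connected_induce_iff]
      have hlenpos : 0 < (l.take ((i : ℕ) + 1)).length := by
        rw [List.length_take, hlen]
        have := i.isLt
        omega
      refine ⟨?_, hpre ((i : ℕ) + 1) (Nat.succ_pos _)⟩
      exact ⟨(l.take ((i : ℕ) + 1))[0], List.getElem_mem hlenpos⟩
    · rw [hsufset, connected_induce_iff]
      have hlenpos : 0 < (l.drop ((i : ℕ) + 1)).length := by
        rw [List.length_drop, hlen]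
        omega
      refine ⟨⟨(l.drop ((i : ℕ) + 1))[0], List.getElem_mem hlenpos⟩, ?_⟩
      intro x hx y hy
      obtain ⟨a₁, ha₁, hr₁⟩ := hsuf ((i : ℕ) + 1) x hx
      obtain ⟨a₂, ha₂, hr₂⟩ := hsuf ((i : ℕ) + 1) y hy
      have e₁ : a₁ = t := Finset.mem_singleton.mp ha₁
      have e₂ : a₂ = t := Finset.mem_singleton.mp ha₂
      rw [e₁] at hr₁
      rw [e₂] at hr₂
      exact hr₁.trans hr₂.symm

end StNum

theorem stmt3 {V : Type*} [Fintype V] (G : SimpleGraph V) (hG : G.Connected)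
    (hcut2 : ∀ v : V, IsCutVertex G v →
      Nat.card ((G.induce ({v}ᶜ : Set V)).ConnectedComponent) = 2)
    (hblock : ∀ B : Set V, IsBlock G B → ({x ∈ B | IsCutVertex G x}).ncard ≤ 2) :
    ∃ e : Fin (Fintype.card V) ≃ V,
      ∀ i : Fin (Fintype.card V), (i : ℕ) < Fintype.card V - 1 →
        (G.induce {x : V | ∃ j : Fin (Fintype.card V), j ≤ i ∧ e j = x}).Connected ∧
        (G.induce {x : V | ∃ j : Fin (Fintype.card V), i < j ∧ e j = x}).Connected := by
  exact StNum.main_result hG hcut2 hblock
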